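/- Let n ∈ ℕ, λ ∈ ℝ, ε > 0, and let g : [0,ε) → ℂ be continuously differentiable. Define h(x) = e^{−iλ/x} x^{(n−1)/2} g(x) for x ∈ (0,ε). Then the boundary pairing lim_{x→0⁺} x^{1−n} ( conj(h(x)) · x² h'(x) − h(x) · x² (conj∘h)'(x) ) exists and equals 2iλ |g(0)|². (This is the Green's-formula boundary computation in the proof of Lemma 6.1: for an incoming function h = x^{(n−1)/2} e^{−iλ/x} (h₀ + O(x)), the limit of the surface term h̄ x² ∂_x h − h x² ∂_x h̄, weighted by the scattering surface measure factor x^{1−n}, is 2iλ|h₀|²; combined with (H−λ²)h = 0 this forces h₀ ≡ 0.) -/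

import Mathlib

open Set Complex

private lemma key_alg (x lam c e W A B g1 g2 G1 G2 al : ℂ) (hx : x ≠ 0) (hce : c * e = 1)
    (hW : W * (A * A) = 1) :
    W * ((c * A * g2) * x ^ 2 * ((e * (I * lam / x ^ 2) * A + e * (al * B)) * g1 + e * A * G1)
      - (e * A * g1) * x ^ 2 * ((c * (-(I * lam) / x ^ 2) * A + c * (al * B)) * g2 + c * A * G2))
    = 2 * I * lam * (g1 * g2) + x ^ 2 * (g2 * G1 - g1 * G2) := by
  have hxx : x ^ 2 * (x ^ 2)⁻¹ = 1 := mul_inv_cancel₀ (pow_ne_zero 2 hx)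
  linear_combination (W * c * e * A ^ 2 * 2 * I * lam * g1 * g2) * hxx +
    (W * A ^ 2 * (2 * I * lam * g1 * g2 + x ^ 2 * (g2 * G1 - g1 * G2))) * hce +
    (2 * I * lam * g1 * g2 + x ^ 2 * (g2 * G1 - g1 * G2)) * hW

/-- Green's-formula boundary pairing computation from the proof of Lemma 6.1:
for an incoming function `h(x) = e^{-iλ/x} x^{(n-1)/2} g(x)` with `g` C¹ up to the
boundary, the limit as `x → 0⁺` of
`x^{1-n}(conj(h) x² h' - h x² (conj h)')` exists and equals `2iλ|g(0)|²`. -/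
theorem stmt_3 (n : ℕ) (lam : ℝ) (ε : ℝ) (hε : 0 < ε)
    (g : ℝ → ℂ) (hg : ContDiffOn ℝ 1 g (Ico 0 ε))
    (h : ℝ → ℂ)
    (hh : ∀ x ∈ Ioo 0 ε,
      h x = Complex.exp (-Complex.I * (lam : ℂ) / (x : ℂ)) *
        ((x ^ (((n : ℝ) - 1) / 2) : ℝ) : ℂ) * g x) :
    Filter.Tendsto
      (fun x : ℝ =>
        ((x ^ ((1 : ℝ) - (n : ℝ)) : ℝ) : ℂ) *
          ((starRingEnd ℂ) (h x) * (x : ℂ) ^ 2 * deriv h x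
            - h x * (x : ℂ) ^ 2 * deriv (fun t => (starRingEnd ℂ) (h t)) x))
      (nhdsWithin 0 (Ioo 0 ε))
      (nhds (2 * Complex.I * (lam : ℂ) * ((Complex.normSq (g 0) : ℝ) : ℂ))) := by
  set α : ℝ := ((n : ℝ) - 1) / 2 with hα
  set G : ℝ → ℂ := fun t => derivWithin g (Ico 0 ε) t with hGdef
  set V : ℝ → ℂ := fun x =>
    2 * Complex.I * (lam : ℂ) * (g x * (starRingEnd ℂ) (g x)) +
      (x : ℂ) ^ 2 * ((starRingEnd ℂ) (g x) * G x - g x * (starRingEnd ℂ) (G x)) with hVdef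
  -- Step 1: the function equals V on Ioo 0 ε
  have hV : ∀ x ∈ Ioo 0 ε,
      ((x ^ ((1 : ℝ) - (n : ℝ)) : ℝ) : ℂ) *
          ((starRingEnd ℂ) (h x) * (x : ℂ) ^ 2 * deriv h x
            - h x * (x : ℂ) ^ 2 * deriv (fun t => (starRingEnd ℂ) (h t)) x) = V x := by
    intro x hx
    obtain ⟨hx0, hxε⟩ := hx
    have hxne : x ≠ 0 := ne_of_gt hx0
    have hxC : (x : ℂ) ≠ 0 := by exact_mod_cast hxne
    have hIoo : Ioo 0 ε ∈ nhds x := Ioo_mem_nhds hx0 hxε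
    have hmem : Ico 0 ε ∈ nhds x := Filter.mem_of_superset hIoo Ioo_subset_Ico_self
    set e : ℂ := Complex.exp (-Complex.I * (lam : ℂ) / (x : ℂ)) with he
    set c : ℂ := (starRingEnd ℂ) e with hc
    set A : ℂ := ((x ^ α : ℝ) : ℂ) with hA
    set B : ℂ := ((x ^ (α - 1) : ℝ) : ℂ) with hB
    set W : ℂ := ((x ^ ((1 : ℝ) - (n : ℝ)) : ℝ) : ℂ) with hW
    -- conj e * e = 1
    have hce : c * e = 1 := by
      rw [hc, he, ← Complex.exp_conj, ← Complex.exp_add, ← Complex.exp_zero]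
      congr 1
      simp only [map_div₀, map_mul, map_neg, Complex.conj_I, Complex.conj_ofReal]
      ring
    -- W * (A * A) = 1
    have hWA : W * (A * A) = 1 := by
      rw [hW, hA]
      have hr : x ^ ((1 : ℝ) - (n : ℝ)) * (x ^ α * x ^ α) = 1 := by
        rw [← Real.rpow_add hx0, ← Real.rpow_add hx0]
        have hz : (1 : ℝ) - (n : ℝ) + (α + α) = 0 := by rw [hα]; ring
        rw [hz, Real.rpow_zero]
      exact_mod_cast congrArg (Complex.ofReal) hr
    -- derivative of g
    have hgd : HasDerivAt g (G x) x :=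
      ((hg.differentiableOn one_ne_zero x ⟨hx0.le, hxε⟩).hasDerivWithinAt).hasDerivAt hmem
    -- derivative of the exponential factor
    have hinv : HasDerivAt (fun t : ℝ => -Complex.I * (lam : ℂ) / (t : ℂ))
        (Complex.I * (lam : ℂ) / (x : ℂ) ^ 2) x := by
      have hor : HasDerivAt (fun t : ℝ => (t : ℂ)) 1 x := by
        simpa using (hasDerivAt_id x).ofReal_comp
      have h1 := (hasDerivAt_const x (-Complex.I * (lam : ℂ))).div hor hxC
      convert h1 using 1
      · rfl
      · rfl
      ring
    have hexp : HasDerivAt (fun t : ℝ => Complex.exp (-Complex.I * (lam : ℂ) / (t : ℂ)))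
        (e * (Complex.I * (lam : ℂ) / (x : ℂ) ^ 2)) x := hinv.cexp
    -- derivative of the power factor
    have hpow : HasDerivAt (fun t : ℝ => ((t ^ α : ℝ) : ℂ)) ((α : ℂ) * B) x := by
      have h1 := (Real.hasDerivAt_rpow_const (p := α) (Or.inl hxne)).ofReal_comp
      have : ((α * x ^ (α - 1) : ℝ) : ℂ) = (α : ℂ) * B := by push_cast [hB]; ring
      rwa [this] at h1
    -- derivative of the model function
    set D : ℂ := (e * (Complex.I * (lam : ℂ) / (x : ℂ) ^ 2) * A + e * ((α : ℂ) * B)) * g x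
        + e * A * G x with hD
    have hφ : HasDerivAt (fun t : ℝ => Complex.exp (-Complex.I * (lam : ℂ) / (t : ℂ)) *
        ((t ^ α : ℝ) : ℂ) * g t) D x := (hexp.mul hpow).mul hgd
    -- h agrees with the model near x
    have heq : h =ᶠ[nhds x] fun t : ℝ => Complex.exp (-Complex.I * (lam : ℂ) / (t : ℂ)) *
        ((t ^ α : ℝ) : ℂ) * g t := Filter.eventuallyEq_of_mem hIoo hh
    have hderiv : deriv h x = D := heq.deriv_eq.trans hφ.deriv
    -- conjugate derivative
    have hderivc : deriv (fun t => (starRingEnd ℂ) (h t)) x = (starRingEnd ℂ) D := by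
      have h1 : (fun t => (starRingEnd ℂ) (h t)) =ᶠ[nhds x]
          fun t => star (Complex.exp (-Complex.I * (lam : ℂ) / (t : ℂ)) *
            ((t ^ α : ℝ) : ℂ) * g t) := by
        filter_upwards [hIoo] with t ht
        rw [hh t ht, starRingEnd_apply]
      rw [h1.deriv_eq, hφ.star.deriv, starRingEnd_apply]
    -- conjugate of D
    have hDc : (starRingEnd ℂ) D =
        (c * (-(Complex.I * (lam : ℂ)) / (x : ℂ) ^ 2) * A + c * ((α : ℂ) * B)) *
          (starRingEnd ℂ) (g x) + c * A * (starRingEnd ℂ) (G x) := by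
      rw [hD, hc, hA, hB]
      simp only [map_add, map_mul, map_div₀, Complex.conj_I, map_pow, map_neg,
        Complex.conj_ofReal, map_ofNat]
      ring
    -- value of h and its conjugate at x
    have hhx : h x = e * A * g x := hh x ⟨hx0, hxε⟩
    have hhxc : (starRingEnd ℂ) (h x) = c * A * (starRingEnd ℂ) (g x) := by
      rw [hhx, hc, hA]
      simp [map_mul, Complex.conj_ofReal]
    rw [hderiv, hderivc, hhxc, hhx, hDc, hD]
    simp only [hVdef]
    exact key_alg (x : ℂ) (lam : ℂ) c e W A B (g x) ((starRingEnd ℂ) (g x)) (G x)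
      ((starRingEnd ℂ) (G x)) (α : ℂ) hxC hce hWA
  -- Step 2: V tends to the limit
  have h0 : (0 : ℝ) ∈ Ico 0 ε := ⟨le_rfl, hε⟩
  have hmono : nhdsWithin (0 : ℝ) (Ioo 0 ε) ≤ nhdsWithin 0 (Ico 0 ε) :=
    nhdsWithin_mono _ Ioo_subset_Ico_self
  have hgc : Filter.Tendsto g (nhdsWithin 0 (Ioo 0 ε)) (nhds (g 0)) :=
    ((hg.continuousOn 0 h0).tendsto).mono_left hmono
  have hGc : Filter.Tendsto G (nhdsWithin 0 (Ioo 0 ε)) (nhds (G 0)) :=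
    (((hg.continuousOn_derivWithin (uniqueDiffOn_Ico 0 ε) le_rfl) 0 h0).tendsto).mono_left hmono
  have hgcs : Filter.Tendsto (fun x => (starRingEnd ℂ) (g x)) (nhdsWithin 0 (Ioo 0 ε))
      (nhds ((starRingEnd ℂ) (g 0))) := by
    simpa only [starRingEnd_apply] using hgc.star
  have hGcs : Filter.Tendsto (fun x => (starRingEnd ℂ) (G x)) (nhdsWithin 0 (Ioo 0 ε))
      (nhds ((starRingEnd ℂ) (G 0))) := by
    simpa only [starRingEnd_apply] using hGc.star
  have hxc : Filter.Tendsto (fun x : ℝ => ((x : ℂ))) (nhdsWithin 0 (Ioo 0 ε)) (nhds 0) := by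
    have := (Complex.continuous_ofReal.tendsto 0).mono_left (nhdsWithin_le_nhds (s := Ioo 0 ε))
    simpa using this
  have hVtend : Filter.Tendsto V (nhdsWithin 0 (Ioo 0 ε))
      (nhds (2 * Complex.I * (lam : ℂ) * ((Complex.normSq (g 0) : ℝ) : ℂ))) := by
    rw [hVdef]
    have := (Filter.Tendsto.mul (tendsto_const_nhds
        (x := 2 * Complex.I * (lam : ℂ))) (hgc.mul hgcs)).add
      (((hxc.pow 2).mul ((hgcs.mul hGc).sub (hgc.mul hGcs))))
    simpa [Complex.mul_conj] using this
  exact hVtend.congr' (Filter.Eventually.mono self_mem_nhdsWithin fun x hx => (hV x hx).symm)
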